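/- Every circular arc graph G on n ≥ 2 vertices admits a circular arc representation in which (1) all 2n endpoints of the arcs are distinct, (2) the left endpoints of the arcs are spaced uniformly at angular distance 2π/n around the circle, and (3) no endpoint lies on any of a prescribed finite set of reference lines through the center. -/

import Mathlib

noncomputable section

/-- The circle of circumference `2π`, as `ℝ / 2πℤ`. -/
abbrev Circle2pi := AddCircle (2 * Real.pi)

/-- The closed arc traversed clockwise (decreasing angle) from the angle `s`
(its left endpoint) through angular length `ℓ`; its right endpoint is `s - ℓ`. -/
def arcSet (s ℓ : ℝ) : Set Circle2pi :=
  (fun t : ℝ => ((s - t : ℝ) : Circle2pi)) '' Set.Icc 0 ℓ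

/-- `f` is a circular-arc representation of `G`: each vertex gets a (start angle, length)
pair describing a proper closed arc, and distinct vertices are adjacent iff
their arcs intersect. -/
def IsCARep {V : Type*} (G : SimpleGraph V) (f : V → ℝ × ℝ) : Prop :=
  (∀ v, 0 < (f v).2 ∧ (f v).2 < 2 * Real.pi) ∧
  ∀ u v, u ≠ v →
    (G.Adj u v ↔ (arcSet (f u).1 (f u).2 ∩ arcSet (f v).1 (f v).2).Nonempty)

/-- `box(G) ≤ k`: `G` is the intersection of `k` interval graphs on `V`. -/
def BoxicityLE {V : Type*} (G : SimpleGraph V) (k : ℕ) : Prop :=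
  ∃ I : Fin k → V → Set ℝ,
    (∀ i v, ∃ a b : ℝ, a ≤ b ∧ I i v = Set.Icc a b) ∧
    ∀ u v : V, u ≠ v → (G.Adj u v ↔ ∀ i, (I i u ∩ I i v).Nonempty)

/-- Reflection of the circle across the line through the center at angle `θ`. -/
def reflMap (θ : ℝ) : Circle2pi → Circle2pi := fun p => ((2 * θ : ℝ) : Circle2pi) - p

/-- The open sector `S_k` (numbered anticlockwise from the positive x-axis):
points of the circle with angle strictly between `πk/α` and `π(k+1)/α`. -/
def sector (α : ℕ) (k : ℤ) : Set Circle2pi :=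
  (fun t : ℝ => (t : Circle2pi)) '' Set.Ioo (Real.pi * k / α) (Real.pi * (k + 1) / α)

/-- Signed coordinate of a point of the circle when orthogonally projected onto the
line through the center at angle `θ` (identified with ℝ). -/
def projCoord (θ : ℝ) : Circle2pi → ℝ :=
  Function.Periodic.lift
    (f := fun x : ℝ => Real.cos (x - θ))
    (fun x => by simp only []; rw [show x + 2 * Real.pi - θ = (x - θ) + 2 * Real.pi by ring,
      Real.cos_add_two_pi])


namespace Stmt1Aux

lemma tp_pos : (0:ℝ) < 2 * Real.pi := by positivity

/-- reduction of `x` modulo `2π` into `[0, 2π)`. -/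
def Md (x : ℝ) : ℝ := 2 * Real.pi * Int.fract (x / (2 * Real.pi))

lemma Md_nonneg (x : ℝ) : 0 ≤ Md x := mul_nonneg tp_pos.le (Int.fract_nonneg _)

lemma Md_lt (x : ℝ) : Md x < 2 * Real.pi := by
  have h := Int.fract_lt_one (x / (2 * Real.pi))
  have := tp_pos
  calc 2 * Real.pi * Int.fract (x / (2 * Real.pi)) < 2 * Real.pi * 1 := by
        exact mul_lt_mul_of_pos_left h tp_pos
    _ = 2 * Real.pi := mul_one _

lemma Md_add_int (x : ℝ) (k : ℤ) : Md (x + 2 * Real.pi * k) = Md x := by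
  unfold Md
  rw [show (x + 2 * Real.pi * k) / (2 * Real.pi) = x / (2 * Real.pi) + k by
    field_simp, Int.fract_add_intCast]

lemma exists_sub_Md (x : ℝ) : ∃ k : ℤ, x - Md x = 2 * Real.pi * k := by
  refine ⟨⌊x / (2 * Real.pi)⌋, ?_⟩
  unfold Md Int.fract
  have h := tp_pos.ne'
  field_simp
  ring

lemma Md_congr {x y : ℝ} (h : ∃ k : ℤ, x - y = 2 * Real.pi * k) : Md x = Md y := by
  obtain ⟨k, hk⟩ := h
  have : x = y + 2 * Real.pi * k := by linarith
  rw [this, Md_add_int]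

lemma Md_eq_self {x : ℝ} (h0 : 0 ≤ x) (h1 : x < 2 * Real.pi) : Md x = x := by
  unfold Md
  rw [Int.fract_eq_self.2 ⟨div_nonneg h0 tp_pos.le, (div_lt_one tp_pos).2 h1⟩]
  field_simp

lemma Md_zero : Md 0 = 0 := by simpa using Md_eq_self le_rfl tp_pos

lemma Md_eq_zero_iff {x : ℝ} : Md x = 0 ↔ ∃ k : ℤ, x = 2 * Real.pi * k := by
  constructor
  · intro h
    obtain ⟨k, hk⟩ := exists_sub_Md x
    exact ⟨k, by linarith⟩
  · rintro ⟨k, rfl⟩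
    rw [show 2 * Real.pi * k = 0 + 2 * Real.pi * k by ring, Md_add_int, Md_zero]

lemma Md_neg {x : ℝ} (h : Md x ≠ 0) : Md (-x) = 2 * Real.pi - Md x := by
  obtain ⟨k, hk⟩ := exists_sub_Md x
  have h1 : Md (-x) = Md (2 * Real.pi - Md x) := by
    apply Md_congr
    exact ⟨-k - 1, by push_cast; linarith⟩
  rw [h1, Md_eq_self (by linarith [Md_lt x]) (by linarith [lt_of_le_of_ne (Md_nonneg x) (Ne.symm h)])]

lemma coe_eq_coe {x y : ℝ} :
    ((x : ℝ) : Circle2pi) = ((y : ℝ) : Circle2pi) ↔ ∃ k : ℤ, x - y = 2 * Real.pi * k := by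
  rw [QuotientAddGroup.eq_iff_sub_mem, AddSubgroup.mem_zmultiples_iff]
  constructor
  · rintro ⟨k, hk⟩
    exact ⟨k, by rw [← hk]; push_cast [zsmul_eq_mul]; ring⟩
  · rintro ⟨k, hk⟩
    exact ⟨k, by rw [hk]; push_cast [zsmul_eq_mul]; ring⟩

lemma coe_eq_coe_iff_Md {x y : ℝ} :
    ((x : ℝ) : Circle2pi) = ((y : ℝ) : Circle2pi) ↔ Md (x - y) = 0 := by
  rw [coe_eq_coe, Md_eq_zero_iff]

lemma mem_arcSet {s ℓ y : ℝ} (h0 : 0 ≤ ℓ) (h1 : ℓ < 2 * Real.pi) :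
    ((y : ℝ) : Circle2pi) ∈ arcSet s ℓ ↔ Md (s - y) ≤ ℓ := by
  constructor
  · rintro ⟨t, ⟨ht0, ht1⟩, hty⟩
    obtain ⟨k, hk⟩ := coe_eq_coe.1 hty
    have : Md (s - y) = Md t := Md_congr ⟨k, by linarith⟩
    rw [this, Md_eq_self ht0 (lt_of_le_of_lt ht1 h1)]
    exact ht1
  · intro h
    refine ⟨Md (s - y), ⟨Md_nonneg _, h⟩, ?_⟩
    obtain ⟨k, hk⟩ := exists_sub_Md (s - y)
    exact coe_eq_coe.2 ⟨k, by linarith⟩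

lemma arc_inter_iff {su ℓu sv ℓv : ℝ} (hu0 : 0 ≤ ℓu) (hu1 : ℓu < 2 * Real.pi)
    (hv0 : 0 ≤ ℓv) (hv1 : ℓv < 2 * Real.pi) :
    (arcSet su ℓu ∩ arcSet sv ℓv).Nonempty ↔
      Md (su - sv) ≤ ℓu ∨ Md (sv - su) ≤ ℓv := by
  constructor
  · rintro ⟨x, hxu, hxv⟩
    obtain ⟨t, ⟨ht0, ht1⟩, rfl⟩ := hxu
    have hr : Md (sv - (su - t)) ≤ ℓv := (mem_arcSet hv0 hv1).1 hxv
    set r := Md (sv - (su - t)) with hrdef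
    have hr0 : 0 ≤ r := Md_nonneg _
    obtain ⟨k, hk⟩ := exists_sub_Md (sv - (su - t))
    rcases le_or_gt r t with h | h
    · left
      have : Md (su - sv) = Md (t - r) := Md_congr ⟨-k, by push_cast; linarith⟩
      rw [this, Md_eq_self (by linarith) (by linarith)]
      linarith
    · right
      have : Md (sv - su) = Md (r - t) := Md_congr ⟨k, by push_cast; linarith⟩
      rw [this, Md_eq_self (by linarith) (by linarith [Md_lt (sv - (su - t))])]
      linarith
  · rintro (h | h)
    · refine ⟨((sv : ℝ) : Circle2pi), (mem_arcSet hu0 hu1).2 h, (mem_arcSet hv0 hv1).2 ?_⟩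
      simp [Md_zero]
      linarith
    · refine ⟨((su : ℝ) : Circle2pi), (mem_arcSet hu0 hu1).2 ?_, (mem_arcSet hv0 hv1).2 h⟩
      simp [Md_zero]
      linarith


/-- combinatorial form of a circular-arc representation -/
def GoodRep {V : Type*} (G : SimpleGraph V) (s ℓ : V → ℝ) : Prop :=
  (∀ v, 0 < ℓ v ∧ ℓ v < 2 * Real.pi) ∧
  ∀ u v, u ≠ v → (G.Adj u v ↔ Md (s u - s v) ≤ ℓ u ∨ Md (s v - s u) ≤ ℓ v)

lemma isCARep_iff {V : Type*} (G : SimpleGraph V) (f : V → ℝ × ℝ) :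
    IsCARep G f ↔ GoodRep G (fun v => (f v).1) (fun v => (f v).2) := by
  unfold IsCARep GoodRep
  constructor <;> rintro ⟨hb, ha⟩ <;> refine ⟨hb, fun u v huv => ?_⟩ <;> rw [ha u v huv]
  · exact arc_inter_iff (hb u).1.le (hb u).2 (hb v).1.le (hb v).2
  · exact (arc_inter_iff (hb u).1.le (hb u).2 (hb v).1.le (hb v).2).symm

lemma stepA {V : Type*} [Fintype V] [Nonempty V] (G : SimpleGraph V) {s ℓ : V → ℝ}
    (h : GoodRep G s ℓ) :
    ∃ s' ℓ' : V → ℝ, GoodRep G s' ℓ' ∧ ∀ u v : V, u ≠ v → Md (s' u - s' v) ≠ 0 := by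
  classical
  obtain ⟨hb, ha⟩ := h
  set n := Fintype.card V with hn
  let σ : V ≃ Fin n := Fintype.equivFin V
  -- the safety margin
  let h2 : V × V → ℝ := fun p =>
    min (min (ℓ p.1) (2 * Real.pi - ℓ p.1))
      (min (if 0 < Md (s p.1 - s p.2) then Md (s p.1 - s p.2) else 1)
        (if ℓ p.1 < Md (s p.1 - s p.2) ∧ ℓ p.2 < Md (s p.2 - s p.1)
          then Md (s p.1 - s p.2) - ℓ p.1 else 1))
  have hne : (Finset.univ : Finset (V × V)).Nonempty := Finset.univ_nonempty
  set μ : ℝ := min 1 (Finset.univ.inf' hne h2) with hμdef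
  have hμ2 : ∀ p : V × V, μ ≤ h2 p := fun p =>
    le_trans (min_le_right _ _) (Finset.inf'_le h2 (Finset.mem_univ p))
  have hμpos : 0 < μ := by
    rw [hμdef]
    apply lt_min one_pos
    rw [Finset.lt_inf'_iff]
    intro p _
    apply lt_min (lt_min (hb p.1).1 (by linarith [(hb p.1).2]))
    apply lt_min
    · split <;> [assumption; exact one_pos]
    · split
      · next hc => linarith [hc.1]
      · exact one_pos
  have hμ1 : μ ≤ 1 := min_le_left _ _
  have hμℓ : ∀ v : V, μ ≤ ℓ v := fun v =>
    le_trans (hμ2 (v, v)) (le_trans (min_le_left _ _) (min_le_left _ _))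
  have hμℓ2 : ∀ v : V, μ ≤ 2 * Real.pi - ℓ v := fun v =>
    le_trans (hμ2 (v, v)) (le_trans (min_le_left _ _) (min_le_right _ _))
  have hμc : ∀ u v : V, 0 < Md (s u - s v) → μ ≤ Md (s u - s v) := by
    intro u v hc
    have := le_trans (hμ2 (u, v)) (le_trans (min_le_right _ _) (min_le_left _ _))
    rwa [if_pos hc] at this
  have hμd : ∀ u v : V, ℓ u < Md (s u - s v) → ℓ v < Md (s v - s u) →
      μ ≤ Md (s u - s v) - ℓ u := by
    intro u v h1 h2'
    have := le_trans (hμ2 (u, v)) (le_trans (min_le_right _ _) (min_le_right _ _))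
    rwa [if_pos ⟨h1, h2'⟩] at this
  -- the perturbation
  let ε : V → ℝ := fun v => μ * ((σ v : ℕ) + 1) / (2 * (n + 1))
  have hεpos : ∀ v, 0 < ε v := by
    intro v; apply div_pos (mul_pos hμpos (by positivity)) (by positivity)
  have hεlt : ∀ v, ε v < μ / 2 := by
    intro v
    rw [div_lt_div_iff₀ (by positivity) (by positivity)]
    have : ((σ v : ℕ) : ℝ) + 1 < n + 1 := by
      have := (σ v).2
      push_cast
      exact_mod_cast by exact_mod_cast Nat.add_lt_add_right this 1
    nlinarith
  have hεinj : Function.Injective ε := by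
    intro u v huv
    have hr : ((σ u : ℕ) : ℝ) = ((σ v : ℕ) : ℝ) := by
      simp only [ε] at huv
      rw [div_left_inj' (by positivity)] at huv
      have := mul_left_cancel₀ hμpos.ne' huv
      linarith
    exact σ.injective (Fin.ext (by exact_mod_cast hr))
  refine ⟨fun v => s v + ε v, fun v => ℓ v + ε v, ⟨fun v => ⟨by dsimp only; linarith [hεpos v, (hb v).1],
    by dsimp only; linarith [hεlt v, hμℓ2 v, hμpos, (hb v).2]⟩, ?_⟩, ?_⟩
  · -- adjacency preserved
    have key : ∀ u v : V, Md (s u + ε u - (s v + ε v)) = Md (Md (s u - s v) + (ε u - ε v)) := by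
      intro u v
      apply Md_congr
      obtain ⟨k, hk⟩ := exists_sub_Md (s u - s v)
      exact ⟨k, by linarith⟩
    have fwd : ∀ u v : V, Md (s u - s v) ≤ ℓ u →
        Md (s u + ε u - (s v + ε v)) ≤ ℓ u + ε u ∨
        Md (s v + ε v - (s u + ε u)) ≤ ℓ v + ε v := by
      intro u v hc
      set c := Md (s u - s v) with hcdef
      have hc0 : 0 ≤ c := Md_nonneg _
      have heu := hεpos u; have hev := hεpos v
      have heu2 := hεlt u; have hev2 := hεlt v
      rcases le_or_gt 0 (c + (ε u - ε v)) with hcase | hcase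
      · left
        rw [key u v, Md_eq_self hcase (by linarith [hμℓ2 u, (hb u).2])]
        linarith
      · right
        rw [key v u]
        have h1 : Md (Md (s v - s u) + (ε v - ε u)) = Md (-(c + (ε u - ε v))) := by
          apply Md_congr
          obtain ⟨k1, hk1⟩ := exists_sub_Md (s v - s u)
          obtain ⟨k2, hk2⟩ := exists_sub_Md (s u - s v)
          refine ⟨-k1 - k2, ?_⟩
          push_cast
          linarith
        rw [h1, Md_eq_self (by linarith) (by nlinarith [Real.pi_gt_three])]
        linarith [(hb v).1]
    have bwd1 : ∀ u v : V, ℓ u < Md (s u - s v) → ℓ v < Md (s v - s u) →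
        ℓ u + ε u < Md (s u + ε u - (s v + ε v)) := by
      intro u v h1 h2'
      have hμd1 := hμd u v h1 h2'
      have hμℓv := hμℓ v
      set c := Md (s u - s v) with hcdef
      have hc2 : Md (s v - s u) = 2 * Real.pi - c := by
        have : Md (-(s u - s v)) = 2 * Real.pi - c := Md_neg (by linarith [(hb u).1])
        rw [← this]; ring_nf
      rw [hc2] at h2'
      have heu := hεpos u; have hev := hεpos v
      have heu2 := hεlt u; have hev2 := hεlt v
      rw [key u v, Md_eq_self (by linarith [(hb u).1]) (by linarith)]
      linarith
    intro u v huv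
    rw [ha u v huv]
    constructor
    · rintro (hc | hc)
      · exact fwd u v hc
      · exact (or_comm).1 (fwd v u hc)
    · intro hnew
      by_contra hold
      push_neg at hold
      have b1 := bwd1 u v hold.1 hold.2
      have b2 := bwd1 v u hold.2 hold.1
      rcases hnew with hc | hc <;> dsimp only at hc <;> linarith
  · -- distinctness
    intro u v huv
    have key : Md (s u + ε u - (s v + ε v)) = Md (Md (s u - s v) + (ε u - ε v)) := by
      apply Md_congr
      obtain ⟨k, hk⟩ := exists_sub_Md (s u - s v)
      exact ⟨k, by linarith⟩
    rw [key]
    set c := Md (s u - s v) with hcdef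
    have heu := hεpos u; have hev := hεpos v
    have heu2 := hεlt u; have hev2 := hεlt v
    rcases eq_or_lt_of_le (Md_nonneg (s u - s v)) with hc0 | hc0
    · -- c = 0
      rw [show c = 0 by rw [hcdef]; exact hc0.symm, zero_add]
      intro hMd
      obtain ⟨k, hk⟩ := Md_eq_zero_iff.1 hMd
      have hne' : ε u ≠ ε v := fun hh => huv (hεinj hh)
      have : |(k : ℝ)| < 1 := by
        rw [abs_lt]
        constructor <;> nlinarith [Real.pi_gt_three, abs_lt.1 (show |ε u - ε v| < μ / 2 by
          rw [abs_lt]; constructor <;> linarith)]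
      have : k = 0 := by
        have h9 : |k| < 1 := by exact_mod_cast (by push_cast; exact this : (|k| : ℝ) < 1)
        exact Int.abs_lt_one_iff.1 h9
      rw [this] at hk
      simp at hk
      exact hne' (by linarith)
    · -- c > 0
      have hc0' : μ ≤ c := by rw [hcdef]; exact hμc u v (by rw [← hcdef]; exact hc0)
      have h1 := hc0'
      have h2' : 0 < Md (s v - s u) := by
        have : Md (-(s u - s v)) = 2 * Real.pi - c := Md_neg (by linarith)
        have h3 : Md (s v - s u) = 2 * Real.pi - c := by rw [← this]; ring_nf
        rw [h3]; linarith [Md_lt (s u - s v)]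
      have h3 := hμc v u h2'
      have h4 : Md (s v - s u) = 2 * Real.pi - c := by
        have : Md (-(s u - s v)) = 2 * Real.pi - c := Md_neg (by linarith)
        rw [← this]; ring_nf
      rw [h4] at h3
      rw [Md_eq_self (by linarith) (by linarith)]
      intro hh
      nlinarith

lemma stepB {V : Type*} [Fintype V] (G : SimpleGraph V) (hn : 2 ≤ Fintype.card V)
    {s ℓ : V → ℝ} (h : GoodRep G s ℓ)
    (hd : ∀ u v : V, u ≠ v → Md (s u - s v) ≠ 0) :
    ∃ (σ : V ≃ Fin (Fintype.card V)) (m : V → ℕ), (∀ v, m v + 1 ≤ Fintype.card V) ∧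
      ∀ θ₀ : ℝ, GoodRep G
        (fun v => θ₀ - 2 * Real.pi * ((σ v : ℕ) : ℝ) / (Fintype.card V : ℝ))
        (fun v => 2 * Real.pi * (m v : ℝ) / (Fintype.card V : ℝ) +
          2 * Real.pi * (((σ v : ℕ) : ℝ) + 1) /
            ((Fintype.card V : ℝ) * ((Fintype.card V : ℝ) + 1))) := by
  classical
  obtain ⟨hb, ha⟩ := h
  have hV : Nonempty V := Fintype.card_pos_iff.1 (by omega)
  set n := Fintype.card V with hndef
  have hnR : (2:ℝ) ≤ (n:ℝ) := by exact_mod_cast hn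
  have hnpos : (0:ℝ) < (n:ℝ) := by linarith
  obtain ⟨v₁⟩ := hV
  -- clockwise coordinates from the base point
  set e : V → ℝ := fun v => Md (s v₁ - s v) with hedef
  have he0 : ∀ v, 0 ≤ e v := fun v => Md_nonneg _
  have he1 : ∀ v, e v < 2 * Real.pi := fun v => Md_lt _
  -- distances expressed through e
  have hMe : ∀ u v : V, Md (s u - s v) = Md (e v - e u) := by
    intro u v
    apply Md_congr
    obtain ⟨k1, hk1⟩ := exists_sub_Md (s v₁ - s v)
    obtain ⟨k2, hk2⟩ := exists_sub_Md (s v₁ - s u)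
    exact ⟨k1 - k2, by push_cast; linarith⟩
  have heinj : Function.Injective e := by
    intro u v huv
    by_contra hne
    apply hd u v hne
    rw [hMe u v, huv, sub_self, Md_zero]
  -- sorting equiv
  letI : LinearOrder V := LinearOrder.lift' e heinj
  have hle : ∀ a b : V, a ≤ b ↔ e a ≤ e b := fun a b => Iff.rfl
  let τ : Fin n ≃o V := monoEquivOfFin V hndef.symm
  let σ : V ≃ Fin n := τ.toEquiv.symm
  have hσle : ∀ a b : V, (σ a : ℕ) ≤ (σ b : ℕ) ↔ e a ≤ e b := by
    intro a b
    rw [← hle]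
    constructor
    · intro hh
      have := τ.monotone (show σ a ≤ σ b from hh)
      simpa [σ] using this
    · intro hh
      have h2 : τ.symm a ≤ τ.symm b := (OrderIso.le_iff_le τ.symm).2 hh
      exact h2
  have hσlt : ∀ a b : V, (σ a : ℕ) < (σ b : ℕ) ↔ e a < e b := by
    intro a b
    rw [← not_le, ← not_le, not_iff_not]
    exact hσle b a
  have hσb : ∀ v : V, (σ v : ℕ) < n := fun v => (σ v).2
  -- the rank function
  set rk : V → V → ℕ := fun u v =>
    if (σ u : ℕ) ≤ (σ v : ℕ) then (σ v : ℕ) - (σ u : ℕ) else (σ v : ℕ) + n - (σ u : ℕ)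
    with hrkdef
  have hrk_lt : ∀ u v, rk u v < n := by
    intro u v
    have h1 := hσb u; have h2 := hσb v
    rw [hrkdef]
    dsimp only
    split <;> omega
  -- Md between elements of [0, 2π)
  have hMd2 : ∀ a b : ℝ, 0 ≤ a → a < 2 * Real.pi → 0 ≤ b → b < 2 * Real.pi →
      Md (a - b) = if b ≤ a then a - b else a - b + 2 * Real.pi := by
    intro a b ha0 ha1 hb0 hb1
    split
    · next hh => exact Md_eq_self (by linarith) (by linarith)
    · next hh =>
      push_neg at hh
      have h9 : Md (a - b + 2 * Real.pi) = Md (a - b) := by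
        rw [show a - b + 2 * Real.pi = (a - b) + 2 * Real.pi * ((1:ℤ):ℝ) by push_cast; ring,
          Md_add_int]
      rw [← h9]
      exact Md_eq_self (by linarith) (by linarith)
  -- the key order-compatibility lemma
  have horder : ∀ u v w : V, Md (s u - s v) < Md (s u - s w) ↔ rk u v < rk u w := by
    intro u v w
    rw [hMe u v, hMe u w, hMd2 _ _ (he0 v) (he1 v) (he0 u) (he1 u),
      hMd2 _ _ (he0 w) (he1 w) (he0 u) (he1 u), hrkdef]
    dsimp only
    have h1 := hσb u; have h2 := hσb v; have h3 := hσb w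
    rcases le_or_gt (e u) (e v) with huv | huv <;> rcases le_or_gt (e u) (e w) with huw | huw
    · rw [if_pos huv, if_pos huw, if_pos ((hσle u v).2 huv), if_pos ((hσle u w).2 huw)]
      have hσuv := (hσle u v).2 huv
      have hσuw := (hσle u w).2 huw
      constructor
      · intro hh
        have : e v < e w := by linarith
        have := (hσlt v w).2 this
        omega
      · intro hh
        have : (σ v : ℕ) < (σ w : ℕ) := by omega
        have := (hσlt v w).1 this
        linarith
    · have hσuv := (hσle u v).2 huv
      have hσwu := (hσlt w u).2 huw
      rw [if_pos huv, if_neg (not_le.2 huw), if_pos hσuv, if_neg (not_le.2 hσwu)]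
      constructor
      · intro _; omega
      · intro _; linarith [he0 w, he1 v]
    · have hσvu := (hσlt v u).2 huv
      have hσuw := (hσle u w).2 huw
      rw [if_neg (not_le.2 huv), if_pos huw, if_neg (not_le.2 hσvu), if_pos hσuw]
      constructor
      · intro hh; exfalso; linarith [he0 v, he1 w]
      · intro hh; exfalso; omega
    · have hσvu := (hσlt v u).2 huv
      have hσwu := (hσlt w u).2 huw
      rw [if_neg (not_le.2 huv), if_neg (not_le.2 huw), if_neg (not_le.2 hσvu),
        if_neg (not_le.2 hσwu)]
      constructor
      · intro hh
        have : e v < e w := by linarith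
        have := (hσlt v w).2 this
        omega
      · intro hh
        have : (σ v : ℕ) < (σ w : ℕ) := by omega
        have := (hσlt v w).1 this
        linarith
  have horder' : ∀ u v w : V, Md (s u - s v) ≤ Md (s u - s w) ↔ rk u v ≤ rk u w := by
    intro u v w
    rw [← not_lt, ← not_lt, not_iff_not]
    exact horder u w v
  -- the containment sets and maximal ranks
  set A : V → Finset V := fun u => Finset.univ.filter (fun v => Md (s u - s v) ≤ ℓ u)
    with hAdef
  have hAself : ∀ u, u ∈ A u := by
    intro u
    rw [hAdef]
    simp only [Finset.mem_filter, Finset.mem_univ, true_and, sub_self, Md_zero]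
    exact (hb u).1.le
  set m : V → ℕ := fun u => (A u).sup (rk u) with hmdef
  have hmlt : ∀ u, m u < n := by
    intro u
    obtain ⟨w, hw, hweq⟩ := Finset.exists_mem_eq_sup (A u) ⟨u, hAself u⟩ (rk u)
    rw [hmdef]
    dsimp only
    rw [hweq]
    exact hrk_lt u w
  have hkey : ∀ u v : V, (Md (s u - s v) ≤ ℓ u ↔ rk u v ≤ m u) := by
    intro u v
    constructor
    · intro hv
      rw [hmdef]
      dsimp only
      apply Finset.le_sup (f := rk u)
      rw [hAdef]
      simp only [Finset.mem_filter, Finset.mem_univ, true_and]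
      exact hv
    · intro hv
      obtain ⟨w, hw, hweq⟩ := Finset.exists_mem_eq_sup (A u) ⟨u, hAself u⟩ (rk u)
      rw [hAdef] at hw
      simp only [Finset.mem_filter, Finset.mem_univ, true_and] at hw
      have hv' : rk u v ≤ rk u w := by
        rw [hmdef] at hv; dsimp only at hv; rw [hweq] at hv; exact hv
      exact le_trans ((horder' u v w).2 hv') hw
  refine ⟨σ, m, fun v => by have := hmlt v; omega, ?_⟩
  intro θ₀
  -- new distances
  have hdist : ∀ u v : V,
      Md ((θ₀ - 2 * Real.pi * ((σ u : ℕ) : ℝ) / n) - (θ₀ - 2 * Real.pi * ((σ v : ℕ) : ℝ) / n))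
        = 2 * Real.pi * (rk u v : ℝ) / n := by
    intro u v
    have hcongr : Md ((θ₀ - 2 * Real.pi * ((σ u : ℕ) : ℝ) / n)
        - (θ₀ - 2 * Real.pi * ((σ v : ℕ) : ℝ) / n)) = Md (2 * Real.pi * (rk u v : ℝ) / n) := by
      apply Md_congr
      rw [hrkdef]
      dsimp only
      split
      · next hh =>
        refine ⟨0, ?_⟩
        push_cast [hh]
        field_simp
        ring
      · next hh =>
        push_neg at hh
        refine ⟨-1, ?_⟩
        have hcast : (((σ v : ℕ) + n - (σ u : ℕ) : ℕ) : ℝ)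
            = ((σ v : ℕ) : ℝ) + n - ((σ u : ℕ) : ℝ) := by
          have := hσb u
          push_cast [show (σ u : ℕ) ≤ (σ v : ℕ) + n by omega]
          ring
        rw [hcast]
        field_simp
        ring
    rw [hcongr]
    apply Md_eq_self
    · positivity
    · rw [div_lt_iff₀ hnpos]
      have : (rk u v : ℝ) < (n : ℝ) := by exact_mod_cast hrk_lt u v
      nlinarith [Real.pi_pos]
  -- bounds for the new lengths
  have hδpos : ∀ v : V, 0 < 2 * Real.pi * (((σ v : ℕ) : ℝ) + 1) / ((n : ℝ) * ((n : ℝ) + 1)) := by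
    intro v
    positivity
  have hδlt : ∀ v : V, 2 * Real.pi * (((σ v : ℕ) : ℝ) + 1) / ((n : ℝ) * ((n : ℝ) + 1))
      < 2 * Real.pi / n := by
    intro v
    rw [div_lt_div_iff₀ (by positivity) hnpos]
    have : ((σ v : ℕ) : ℝ) + 1 ≤ (n : ℝ) := by
      have := hσb v
      exact_mod_cast Nat.succ_le_of_lt this
    nlinarith [Real.pi_pos, mul_le_mul_of_nonneg_right this hnpos.le]
  have hnewkey : ∀ u v : V,
      (2 * Real.pi * (rk u v : ℝ) / n ≤ 2 * Real.pi * (m u : ℝ) / (n : ℝ) +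
        2 * Real.pi * (((σ u : ℕ) : ℝ) + 1) / ((n : ℝ) * ((n : ℝ) + 1))) ↔ rk u v ≤ m u := by
    intro u v
    constructor
    · intro hh
      by_contra hcon
      push_neg at hcon
      have h1 : (m u : ℝ) + 1 ≤ (rk u v : ℝ) := by exact_mod_cast hcon
      have h2 := hδlt u
      have h3 : 2 * Real.pi * ((m u : ℝ) + 1) / n ≤ 2 * Real.pi * (rk u v : ℝ) / n := by
        gcongr
      have h4 : 2 * Real.pi * ((m u : ℝ) + 1) / n
          = 2 * Real.pi * (m u : ℝ) / n + 2 * Real.pi / n := by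
        field_simp
      linarith
    · intro hh
      have h1 : (rk u v : ℝ) ≤ (m u : ℝ) := by exact_mod_cast hh
      have h3 : 2 * Real.pi * (rk u v : ℝ) / n ≤ 2 * Real.pi * (m u : ℝ) / n := by
        gcongr
      linarith [hδpos u]
  constructor
  · intro v
    constructor
    · dsimp only
      positivity
    · dsimp only
      have h1 : (m v : ℝ) ≤ (n : ℝ) - 1 := by
        have := hmlt v
        have : (m v : ℝ) ≤ (n:ℝ) - 1 := by
          have h2 : ((m v : ℕ) : ℝ) ≤ ((n - 1 : ℕ) : ℝ) := by exact_mod_cast Nat.le_pred_of_lt this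
          rw [Nat.cast_sub (by omega)] at h2
          simpa using h2
        exact this
      have h2 := hδlt v
      have h3 : 2 * Real.pi * (m v : ℝ) / n ≤ 2 * Real.pi * ((n:ℝ) - 1) / n := by
        gcongr
      have h4 : 2 * Real.pi * ((n:ℝ) - 1) / n + 2 * Real.pi / n = 2 * Real.pi := by
        field_simp
        ring
      linarith
  · intro u v huv
    rw [ha u v huv]
    dsimp only
    rw [hdist u v, hdist v u, hnewkey u v, hnewkey v u, hkey u v, hkey v u]

lemma master {n : ℕ} (hn : 2 ≤ n) (c d k : ℤ)
    (h : 2 * Real.pi * (c:ℝ) / (n:ℝ) + 2 * Real.pi * (d:ℝ) / ((n:ℝ) * ((n:ℝ)+1))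
      = 2 * Real.pi * (k:ℝ)) :
    ((n:ℤ)+1) * c + d = k * n * (n+1) := by
  have hnR : (2:ℝ) ≤ (n:ℝ) := by exact_mod_cast hn
  have hn0 : (n:ℝ) ≠ 0 := by linarith
  have hn1 : ((n:ℝ)+1) ≠ 0 := by linarith
  have hπ : (2*Real.pi) ≠ 0 := ne_of_gt tp_pos
  set D : ℝ := ((n:ℝ)+1)*(c:ℝ) + (d:ℝ) - (k:ℝ)*(n:ℝ)*((n:ℝ)+1) with hDdef
  have hD : 2*Real.pi * D / ((n:ℝ)*((n:ℝ)+1)) = 0 := by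
    have expand : 2*Real.pi * D / ((n:ℝ)*((n:ℝ)+1)) =
        2*Real.pi*(c:ℝ)/(n:ℝ) + 2*Real.pi*(d:ℝ)/((n:ℝ)*((n:ℝ)+1)) - 2*Real.pi*(k:ℝ) := by
      rw [hDdef]
      field_simp
    rw [expand, h]; ring
  rw [div_eq_zero_iff] at hD
  have hD0 : D = 0 := by
    rcases hD with h2 | h2
    · rcases mul_eq_zero.1 h2 with h3 | h3
      · exact absurd h3 hπ
      · exact h3
    · exact absurd h2 (by positivity)
  have hDeq : ((n:ℝ)+1)*(c:ℝ) + (d:ℝ) = (k:ℝ)*(n:ℝ)*((n:ℝ)+1) := by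
    rw [hDdef] at hD0; linarith
  exact_mod_cast hDeq

end Stmt1Aux

open Stmt1Aux

/-- every circular arc graph on `n ≥ 2` vertices has a representation with
all `2n` endpoints distinct, left endpoints uniformly spaced at angular distance `2π/n`
(clockwise), and no endpoint on any of a prescribed finite set of reference lines
through the center. -/
theorem stmt1 {V : Type*} [Fintype V] (G : SimpleGraph V)
    (hn : 2 ≤ Fintype.card V) (hrep : ∃ f : V → ℝ × ℝ, IsCARep G f) (T : Finset ℝ) :
    ∃ f : V → ℝ × ℝ, IsCARep G f ∧
      -- (1) all 2n endpoints (left endpoints and right endpoints) are distinct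
      (Function.Injective (fun x : V × Bool =>
        if x.2 then (((f x.1).1 : ℝ) : Circle2pi)
        else (((f x.1).1 - (f x.1).2 : ℝ) : Circle2pi))) ∧
      -- (2) left endpoints uniformly spaced: 2π/n apart in clockwise order
      (∃ (θ₀ : ℝ) (σ : V ≃ Fin (Fintype.card V)), ∀ v : V,
        (((f v).1 : ℝ) : Circle2pi) =
          ((θ₀ - 2 * Real.pi * ((σ v : ℕ) : ℝ) / (Fintype.card V : ℝ) : ℝ) : Circle2pi)) ∧
      -- (3) no endpoint on a reference line at angle θ ∈ T (which meets the circle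
      -- at the angles θ and θ + π)
      (∀ θ ∈ T, ∀ v : V, ∀ e ∈ ({(((f v).1 : ℝ) : Circle2pi),
          (((f v).1 - (f v).2 : ℝ) : Circle2pi)} : Set Circle2pi),
        e ≠ ((θ : ℝ) : Circle2pi) ∧ e ≠ ((θ + Real.pi : ℝ) : Circle2pi)) := by
  classical
  obtain ⟨f0, hf0⟩ := hrep
  have hV : Nonempty V := Fintype.card_pos_iff.1 (by omega)
  obtain ⟨s, ℓ, hgood, hdis⟩ := stepA G ((isCARep_iff G f0).1 hf0)
  obtain ⟨σ, m, hm, hrep2⟩ := stepB G hn hgood hdis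
  have hnR : (2:ℝ) ≤ ((Fintype.card V : ℕ):ℝ) := by exact_mod_cast hn
  have hnpos : (0:ℝ) < ((Fintype.card V : ℕ):ℝ) := by linarith
  have hn1pos : (0:ℝ) < ((Fintype.card V : ℕ):ℝ) + 1 := by linarith
  have hπ2 : ((2:ℝ) * Real.pi) ≠ 0 := ne_of_gt tp_pos
  set off : V → ℝ := fun v => 2 * Real.pi * ((σ v : ℕ) : ℝ) / (Fintype.card V : ℝ) with hoffdef
  set L : V → ℝ := fun v => 2 * Real.pi * (m v : ℝ) / (Fintype.card V : ℝ) +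
      2 * Real.pi * (((σ v : ℕ) : ℝ) + 1) /
        ((Fintype.card V : ℝ) * ((Fintype.card V : ℝ) + 1)) with hLdef
  set Bad : Set ℝ := ⋃ t ∈ (T : Set ℝ), ⋃ (v : V), ⋃ (i : Bool), ⋃ (j : Bool),
      Set.range (fun k : ℤ =>
        (t + (if i then Real.pi else 0)) + (if j then off v else off v + L v)
          + 2 * Real.pi * k) with hBaddef
  have hbadc : Bad.Countable := by
    rw [hBaddef]
    apply Set.Countable.biUnion T.countable_toSet
    intro t _
    exact Set.countable_iUnion fun v => Set.countable_iUnion fun i =>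
      Set.countable_iUnion fun j => Set.countable_range _
  obtain ⟨θ₀, hθ₀⟩ : ∃ θ₀ : ℝ, θ₀ ∉ Bad := by
    by_contra hcon
    push_neg at hcon
    exact Cardinal.not_countable_real
      (by rw [Set.eq_univ_of_forall hcon] at hbadc; exact hbadc)
  refine ⟨fun v => (θ₀ - off v, L v), (isCARep_iff G _).2 (hrep2 θ₀), ?_,
    ⟨θ₀, σ, fun v => rfl⟩, ?_⟩
  · -- injectivity of endpoints
    have hc2 : (2:ℤ) ≤ (Fintype.card V : ℤ) := by exact_mod_cast hn
    have hintLL : ∀ u v : V, ∀ k : ℤ,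
        (θ₀ - off u) - (θ₀ - off v) = 2 * Real.pi * k → u = v := by
      intro u v k hk
      have hmas := master hn (((σ v : ℕ) : ℤ) - ((σ u : ℕ) : ℤ)) 0 k (by
        have hrw : 2 * Real.pi * (((((σ v : ℕ) : ℤ) - ((σ u : ℕ) : ℤ)) : ℤ) : ℝ)
              / (Fintype.card V : ℝ)
            + 2 * Real.pi * (((0:ℤ) : ℝ)) /
              ((Fintype.card V : ℝ) * ((Fintype.card V : ℝ) + 1))
            = (θ₀ - off u) - (θ₀ - off v) := by
          rw [hoffdef]
          push_cast
          field_simp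
          ring
        rw [hrw, hk])
      have hne : ((Fintype.card V : ℤ)+1) ≠ 0 := by omega
      have hcan : (((σ v : ℕ) : ℤ) - ((σ u : ℕ) : ℤ)) = k * (Fintype.card V : ℤ) := by
        have h0 : (((σ v : ℕ) : ℤ) - ((σ u : ℕ) : ℤ)) * ((Fintype.card V : ℤ)+1)
            = (k * (Fintype.card V : ℤ)) * ((Fintype.card V : ℤ)+1) := by ring_nf; linarith [hmas]
        exact mul_right_cancel₀ hne h0
      have h1 : ((σ u : ℕ) : ℤ) < (Fintype.card V : ℤ) := by exact_mod_cast (σ u).2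
      have h2 : ((σ v : ℕ) : ℤ) < (Fintype.card V : ℤ) := by exact_mod_cast (σ v).2
      have hz := Int.eq_zero_of_abs_lt_dvd ⟨k, by linarith [hcan]⟩
        (by rw [abs_lt]; constructor <;> omega :
          |(((σ v : ℕ) : ℤ) - ((σ u : ℕ) : ℤ))| < (Fintype.card V : ℤ))
      have : (σ u : ℕ) = (σ v : ℕ) := by omega
      exact σ.injective (Fin.ext this)
    have hintLR : ∀ u v : V, ∀ k : ℤ,
        (θ₀ - off u) - (θ₀ - off v - L v) = 2 * Real.pi * k → False := by
      intro u v k hk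
      have hmas := master hn (((σ v : ℕ) : ℤ) + (m v : ℤ) - ((σ u : ℕ) : ℤ))
          (((σ v : ℕ) : ℤ) + 1) k (by
        have hrw : 2 * Real.pi * ((((σ v : ℕ) : ℤ) + (m v : ℤ) - ((σ u : ℕ) : ℤ) : ℤ) : ℝ)
              / (Fintype.card V : ℝ)
            + 2 * Real.pi * (((((σ v : ℕ) : ℤ) + 1 : ℤ)) : ℝ) /
              ((Fintype.card V : ℝ) * ((Fintype.card V : ℝ) + 1))
            = (θ₀ - off u) - (θ₀ - off v - L v) := by
          rw [hoffdef, hLdef]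
          push_cast
          field_simp
          ring
        rw [hrw, hk])
      have hdvd : ((Fintype.card V : ℤ)+1) ∣ (((σ v : ℕ) : ℤ) + 1) :=
        ⟨k * (Fintype.card V : ℤ) - (((σ v : ℕ) : ℤ) + (m v : ℤ) - ((σ u : ℕ) : ℤ)), by
          linarith [hmas,
            mul_comm ((Fintype.card V : ℤ)+1)
              (k * (Fintype.card V : ℤ) - (((σ v : ℕ) : ℤ) + (m v : ℤ) - ((σ u : ℕ) : ℤ)))]⟩
      have h2 : ((σ v : ℕ) : ℤ) < (Fintype.card V : ℤ) := by exact_mod_cast (σ v).2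
      have := Int.le_of_dvd (by omega) hdvd
      omega
    have hintRR : ∀ u v : V, ∀ k : ℤ,
        (θ₀ - off u - L u) - (θ₀ - off v - L v) = 2 * Real.pi * k → u = v := by
      intro u v k hk
      have hmas := master hn
          ((((σ v : ℕ) : ℤ) + (m v : ℤ)) - (((σ u : ℕ) : ℤ) + (m u : ℤ)))
          (((σ v : ℕ) : ℤ) - ((σ u : ℕ) : ℤ)) k (by
        have hrw : 2 * Real.pi *
              ((((((σ v : ℕ) : ℤ) + (m v : ℤ)) - (((σ u : ℕ) : ℤ) + (m u : ℤ))) : ℤ) : ℝ)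
              / (Fintype.card V : ℝ)
            + 2 * Real.pi * (((((σ v : ℕ) : ℤ) - ((σ u : ℕ) : ℤ) : ℤ)) : ℝ) /
              ((Fintype.card V : ℝ) * ((Fintype.card V : ℝ) + 1))
            = (θ₀ - off u - L u) - (θ₀ - off v - L v) := by
          rw [hoffdef, hLdef]
          push_cast
          field_simp
          ring
        rw [hrw, hk])
      have hdvd : ((Fintype.card V : ℤ)+1) ∣ (((σ v : ℕ) : ℤ) - ((σ u : ℕ) : ℤ)) :=
        ⟨k * (Fintype.card V : ℤ)
            - ((((σ v : ℕ) : ℤ) + (m v : ℤ)) - (((σ u : ℕ) : ℤ) + (m u : ℤ))), by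
          linarith [hmas,
            mul_comm ((Fintype.card V : ℤ)+1)
              (k * (Fintype.card V : ℤ)
                - ((((σ v : ℕ) : ℤ) + (m v : ℤ)) - (((σ u : ℕ) : ℤ) + (m u : ℤ))))]⟩
      have h1 : ((σ u : ℕ) : ℤ) < (Fintype.card V : ℤ) := by exact_mod_cast (σ u).2
      have h2 : ((σ v : ℕ) : ℤ) < (Fintype.card V : ℤ) := by exact_mod_cast (σ v).2
      have hz := Int.eq_zero_of_abs_lt_dvd hdvd
        (by rw [abs_lt]; constructor <;> omega)
      have : (σ u : ℕ) = (σ v : ℕ) := by omega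
      exact σ.injective (Fin.ext this)
    rintro ⟨u, bu⟩ ⟨v, bv⟩ hEq
    dsimp only at hEq
    cases bu <;> cases bv <;>
      simp only [Bool.false_eq_true, if_true, if_false] at hEq
    · obtain ⟨k, hk⟩ := coe_eq_coe.1 hEq
      rw [hintRR u v k (by linarith [hk])]
    · obtain ⟨k, hk⟩ := coe_eq_coe.1 hEq
      exact (hintLR v u (-k) (by push_cast; linarith [hk])).elim
    · obtain ⟨k, hk⟩ := coe_eq_coe.1 hEq
      exact (hintLR u v k hk).elim
    · obtain ⟨k, hk⟩ := coe_eq_coe.1 hEq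
      rw [hintLL u v k hk]
  · -- avoiding the reference lines
    intro θ hθ v x hx
    simp only [Set.mem_insert_iff, Set.mem_singleton_iff] at hx
    have hmem : ∀ (i j : Bool) (k : ℤ),
        θ₀ = (θ + (if i then Real.pi else 0)) + (if j then off v else off v + L v)
          + 2 * Real.pi * k → False := by
      intro i j k hkk
      apply hθ₀
      rw [hBaddef]
      exact Set.mem_biUnion (Finset.mem_coe.2 hθ)
        (Set.mem_iUnion.2 ⟨v, Set.mem_iUnion.2 ⟨i, Set.mem_iUnion.2 ⟨j, ⟨k, hkk.symm⟩⟩⟩⟩)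
    rcases hx with hx | hx <;> subst hx <;> constructor
    · intro hcon
      obtain ⟨k, hk⟩ := coe_eq_coe.1 hcon
      exact hmem false true k (by
        simp only [Bool.false_eq_true, if_true, if_false]; linarith [hk])
    · intro hcon
      obtain ⟨k, hk⟩ := coe_eq_coe.1 hcon
      exact hmem true true k (by
        simp only [if_true]; linarith [hk])
    · intro hcon
      obtain ⟨k, hk⟩ := coe_eq_coe.1 hcon
      exact hmem false false k (by
        simp only [Bool.false_eq_true, if_true, if_false]; linarith [hk])
    · intro hcon
      obtain ⟨k, hk⟩ := coe_eq_coe.1 hcon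
      exact hmem true false k (by
        simp only [Bool.false_eq_true, if_true, if_false]; linarith [hk])

end
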